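/- Let n ≥ 1, let G : ℝⁿ → (n×n real symmetric matrices) be smooth with G(q) invertible for every q, and let V : ℝⁿ → ℝ be smooth with V(q) ≠ 0 for every q. Suppose smooth functions χ, ξ¹,…,ξⁿ, ω, f of the variables (t,q,N) ∈ ℝ × ℝⁿ × (0,∞) satisfy the variational-symmetry criterion pr¹X(L) + L·D(χ) = D(f) identically in (t,q,N,v,w) with N > 0. Then: χ is independent of q and N (a function of t alone); each ξ^α is independent of t and N (a function of q alone); f is constant; ω = −N·(Σ_α ξ^α ∂V/∂q^α)/V − N·dχ/dt; and, setting τ(q) := −(Σ_α ξ^α ∂V/∂q^α)/V, the vector field ξ satisfies £_ξ G = τ·G and £_ξ V = −τ·V. -/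

import Mathlib

open scoped BigOperators

/-- Partial derivative `∂f/∂q^α` of a scalar function on `ℝⁿ`. -/
noncomputable def pd {n : ℕ} (f : (Fin n → ℝ) → ℝ) (α : Fin n) (q : Fin n → ℝ) : ℝ :=
  fderiv ℝ f q (Pi.single α 1)

/-- Lie derivative `(£_ξ G)_{μν}`. -/
noncomputable def lieG {n : ℕ} (ξ : (Fin n → ℝ) → Fin n → ℝ)
    (G : (Fin n → ℝ) → Fin n → Fin n → ℝ) (q : Fin n → ℝ) (μ ν : Fin n) : ℝ :=
  ∑ α : Fin n, (ξ q α * pd (fun p => G p μ ν) α q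
      + pd (fun p => ξ p α) μ q * G q α ν
      + pd (fun p => ξ p α) ν q * G q μ α)

/-- Lie derivative `£_ξ V`. -/
noncomputable def lieV {n : ℕ} (ξ : (Fin n → ℝ) → Fin n → ℝ)
    (V : (Fin n → ℝ) → ℝ) (q : Fin n → ℝ) : ℝ :=
  ∑ α : Fin n, ξ q α * pd V α q

/-- `∂g/∂t` for a function `g(t,q,N)` on `ℝ × ℝⁿ × ℝ`. -/
noncomputable def Dt {n : ℕ} (g : ℝ × (Fin n → ℝ) × ℝ → ℝ) (x : ℝ × (Fin n → ℝ) × ℝ) : ℝ :=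
  fderiv ℝ g x (1, 0, 0)

/-- `∂g/∂q^β` for a function `g(t,q,N)`. -/
noncomputable def Dq {n : ℕ} (g : ℝ × (Fin n → ℝ) × ℝ → ℝ) (β : Fin n)
    (x : ℝ × (Fin n → ℝ) × ℝ) : ℝ :=
  fderiv ℝ g x (0, Pi.single β 1, 0)

/-- `∂g/∂N` for a function `g(t,q,N)`. -/
noncomputable def DN {n : ℕ} (g : ℝ × (Fin n → ℝ) × ℝ → ℝ) (x : ℝ × (Fin n → ℝ) × ℝ) : ℝ :=
  fderiv ℝ g x (0, 0, 1)

/-- Total derivative operator `D(g)(t,q,N,v,w) = ∂g/∂t + Σ_β v^β ∂g/∂q^β + w ∂g/∂N`. -/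
noncomputable def Dtot {n : ℕ} (g : ℝ × (Fin n → ℝ) × ℝ → ℝ) (x : ℝ × (Fin n → ℝ) × ℝ)
    (v : Fin n → ℝ) (w : ℝ) : ℝ :=
  Dt g x + (∑ β : Fin n, v β * Dq g β x) + w * DN g x

lemma vsc_sum_single_mul {n : ℕ} (c : Fin n → ℝ) (μ : Fin n) :
    (∑ i : Fin n, (Pi.single μ 1 : Fin n → ℝ) i * c i) = c μ := by
  rw [Finset.sum_eq_single μ]
  · simp
  · intro b _ hb; simp [Pi.single_apply, hb]
  · simp

lemma vsc_linear_zero {n : ℕ} (c : Fin n → ℝ)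
    (h : ∀ v : Fin n → ℝ, (∑ κ : Fin n, v κ * c κ) = 0) (κ : Fin n) : c κ = 0 := by
  have := h (Pi.single κ 1); rwa [vsc_sum_single_mul] at this

lemma vsc_quad_zero {n : ℕ} (T : Fin n → Fin n → ℝ)
    (h : ∀ v : Fin n → ℝ, (∑ μ : Fin n, ∑ ν : Fin n, v μ * v ν * T μ ν) = 0)
    (μ ν : Fin n) : T μ ν + T ν μ = 0 := by
  have collapse : ∀ (v : Fin n → ℝ),
      (∑ μ' : Fin n, ∑ ν' : Fin n, v μ' * v ν' * T μ' ν')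
        = ∑ μ' : Fin n, v μ' * (∑ ν' : Fin n, v ν' * T μ' ν') := by
    intro v
    refine Finset.sum_congr rfl fun μ' _ => ?_
    rw [Finset.mul_sum]
    exact Finset.sum_congr rfl fun ν' _ => by ring
  have hval : ∀ (v : Fin n → ℝ),
      (∑ μ' : Fin n, v μ' * (∑ ν' : Fin n, v ν' * T μ' ν')) = 0 := by
    intro v; rw [← collapse]; exact h v
  have hsingle : ∀ ρ σ : Fin n, T ρ σ + T σ ρ + T ρ ρ + T σ σ = 0 ∨ (ρ = σ) := by
    intro ρ σ
    by_cases hρσ : ρ = σ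
    · right; exact hρσ
    · left
      set u : Fin n → ℝ := (Pi.single ρ 1 : Fin n → ℝ) + (Pi.single σ 1 : Fin n → ℝ) with hu
      have h2 := hval u
      have hinner : ∀ μ' : Fin n,
          (∑ ν' : Fin n, u ν' * T μ' ν')
            = T μ' ρ + T μ' σ := by
        intro μ'
        have : (∑ ν' : Fin n, u ν' * T μ' ν')
            = (∑ ν' : Fin n, (Pi.single ρ 1 : Fin n → ℝ) ν' * T μ' ν')
              + (∑ ν' : Fin n, (Pi.single σ 1 : Fin n → ℝ) ν' * T μ' ν') := by
          rw [← Finset.sum_add_distrib]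
          exact Finset.sum_congr rfl fun ν' _ => by rw [hu]; simp [add_mul]
        rw [this, vsc_sum_single_mul, vsc_sum_single_mul]
      have e2 : (∑ μ' : Fin n, u μ' *
          (∑ ν' : Fin n, u ν' * T μ' ν'))
          = (T ρ ρ + T ρ σ) + (T σ ρ + T σ σ) := by
        calc (∑ μ' : Fin n, u μ' *
            (∑ ν' : Fin n, u ν' * T μ' ν'))
            = ∑ μ' : Fin n, u μ' * (T μ' ρ + T μ' σ) :=
              Finset.sum_congr rfl fun μ' _ => by rw [hinner]
          _ = (∑ μ' : Fin n, (Pi.single ρ 1 : Fin n → ℝ) μ' * (T μ' ρ + T μ' σ))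
                + (∑ μ' : Fin n, (Pi.single σ 1 : Fin n → ℝ) μ' * (T μ' ρ + T μ' σ)) := by
              rw [← Finset.sum_add_distrib]
              exact Finset.sum_congr rfl fun μ' _ => by rw [hu]; simp [add_mul]
          _ = (T ρ ρ + T ρ σ) + (T σ ρ + T σ σ) := by rw [vsc_sum_single_mul, vsc_sum_single_mul]
      rw [e2] at h2
      linarith
  have hdiag : ∀ ρ : Fin n, T ρ ρ = 0 := by
    intro ρ
    have h1 := hval (Pi.single ρ 1)
    have : (∑ μ' : Fin n, (Pi.single ρ 1 : Fin n → ℝ) μ' *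
        (∑ ν' : Fin n, (Pi.single ρ 1 : Fin n → ℝ) ν' * T μ' ν')) = T ρ ρ := by
      have : ∀ μ' : Fin n, (∑ ν' : Fin n, (Pi.single ρ 1 : Fin n → ℝ) ν' * T μ' ν') = T μ' ρ :=
        fun μ' => vsc_sum_single_mul _ _
      calc _ = (∑ μ' : Fin n, (Pi.single ρ 1 : Fin n → ℝ) μ' * T μ' ρ) :=
            Finset.sum_congr rfl fun μ' _ => by rw [this]
        _ = T ρ ρ := vsc_sum_single_mul _ _
    rw [this] at h1; exact h1
  rcases hsingle μ ν with h' | h'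
  · have := hdiag μ; have := hdiag ν; linarith
  · subst h'; have := hdiag μ; linarith

-- nondegeneracy: symmetric matrix with nonzero det has nonzero quadratic form somewhere
lemma vsc_exists_quad_ne {n : ℕ} (hn : 1 ≤ n) (M : Fin n → Fin n → ℝ)
    (hsym : ∀ μ ν, M μ ν = M ν μ)
    (hdet : (Matrix.of fun μ ν => M μ ν).det ≠ 0) :
    ∃ v : Fin n → ℝ, (∑ μ : Fin n, ∑ ν : Fin n, v μ * v ν * M μ ν) ≠ 0 := by
  by_contra hcon
  push_neg at hcon
  have hz : ∀ μ ν, M μ ν + M ν μ = 0 := vsc_quad_zero M hcon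
  apply hdet
  have hM0 : (Matrix.of fun μ ν => M μ ν) = 0 := by
    ext μ ν
    have h1 := hz μ ν
    have h2 := hsym μ ν
    simp only [Matrix.of_apply, Matrix.zero_apply]
    linarith
  rw [hM0]
  have : Nonempty (Fin n) := ⟨⟨0, hn⟩⟩
  simp [Matrix.det_zero]

-- a vector annihilating an invertible matrix (u^T M = 0) is zero
lemma vsc_vec_zero {n : ℕ} (M : Fin n → Fin n → ℝ)
    (hdet : (Matrix.of fun μ ν => M μ ν).det ≠ 0) (u : Fin n → ℝ)
    (h : ∀ κ, (∑ α : Fin n, u α * M α κ) = 0) : ∀ α, u α = 0 := by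
  set A : Matrix (Fin n) (Fin n) ℝ := Matrix.of fun μ ν => M μ ν with hA
  have hvm : Matrix.vecMul u A = 0 := by
    funext κ
    simpa [Matrix.vecMul, dotProduct, hA] using h κ
  have : u = 0 := by
    have h1 : Matrix.vecMul (Matrix.vecMul u A) A⁻¹ = 0 := by rw [hvm]; simp
    rwa [Matrix.vecMul_vecMul, Matrix.mul_nonsing_inv A (isUnit_iff_ne_zero.mpr hdet), Matrix.vecMul_one] at h1
  intro α; rw [this]; rfl

-- cubic identity: Q(v) * ℓ(v) = 0 with Q nondegenerate ⇒ ℓ = 0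
lemma vsc_cubic_zero {n : ℕ} (M : Fin n → Fin n → ℝ) (c : Fin n → ℝ)
    (hne : ∃ v : Fin n → ℝ, (∑ μ : Fin n, ∑ ν : Fin n, v μ * v ν * M μ ν) ≠ 0)
    (h : ∀ v : Fin n → ℝ,
      (∑ μ : Fin n, ∑ ν : Fin n, v μ * v ν * M μ ν) * (∑ β : Fin n, v β * c β) = 0) :
    ∀ β, c β = 0 := by
  intro β
  by_contra hc
  obtain ⟨v0, hv0⟩ := hne
  set u : Fin n → ℝ := Pi.single β 1 with hu
  set Q : (Fin n → ℝ) → ℝ := fun v => (∑ μ : Fin n, ∑ ν : Fin n, v μ * v ν * M μ ν) with hQ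
  set L : (Fin n → ℝ) → ℝ := fun v => (∑ β' : Fin n, v β' * c β') with hL
  have hQexp : ∀ s : ℝ, Q (v0 + s • u)
      = Q v0 + s * (∑ μ : Fin n, ∑ ν : Fin n, (u μ * v0 ν + v0 μ * u ν) * M μ ν)
        + s ^ 2 * Q u := by
    intro s
    simp only [hQ]
    have : ∀ μ : Fin n, (∑ ν : Fin n, (v0 + s • u) μ * (v0 + s • u) ν * M μ ν)
        = (∑ ν : Fin n, v0 μ * v0 ν * M μ ν)
          + s * (∑ ν : Fin n, (u μ * v0 ν + v0 μ * u ν) * M μ ν)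
          + s ^ 2 * (∑ ν : Fin n, u μ * u ν * M μ ν) := by
      intro μ
      rw [Finset.mul_sum, Finset.mul_sum, ← Finset.sum_add_distrib, ← Finset.sum_add_distrib]
      refine Finset.sum_congr rfl fun ν _ => ?_
      simp only [Pi.add_apply, Pi.smul_apply, smul_eq_mul]
      ring
    calc (∑ μ : Fin n, ∑ ν : Fin n, (v0 + s • u) μ * (v0 + s • u) ν * M μ ν)
        = ∑ μ : Fin n, ((∑ ν : Fin n, v0 μ * v0 ν * M μ ν)
          + s * (∑ ν : Fin n, (u μ * v0 ν + v0 μ * u ν) * M μ ν)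
          + s ^ 2 * (∑ ν : Fin n, u μ * u ν * M μ ν)) :=
          Finset.sum_congr rfl fun μ _ => this μ
      _ = _ := by
          rw [Finset.sum_add_distrib, Finset.sum_add_distrib, ← Finset.mul_sum, ← Finset.mul_sum]
  have hLexp : ∀ s : ℝ, L (v0 + s • u) = L v0 + s * c β := by
    intro s
    simp only [hL]
    have : (∑ β' : Fin n, (v0 + s • u) β' * c β')
        = (∑ β' : Fin n, v0 β' * c β') + s * (∑ β' : Fin n, u β' * c β') := by
      rw [Finset.mul_sum, ← Finset.sum_add_distrib]
      refine Finset.sum_congr rfl fun β' _ => ?_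
      simp only [Pi.add_apply, Pi.smul_apply, smul_eq_mul]
      ring
    rw [this, hu, vsc_sum_single_mul]
  have hL0 : L v0 = 0 := by
    rcases mul_eq_zero.mp (h v0) with h' | h'
    · exact absurd h' hv0
    · exact h'
  have hQs : ∀ s : ℝ, s ≠ 0 → Q (v0 + s • u) = 0 := by
    intro s hs
    rcases mul_eq_zero.mp (h (v0 + s • u)) with h' | h'
    · exact h'
    · exfalso
      have h2 : L (v0 + s • u) = 0 := h'
      rw [hLexp, hL0, zero_add] at h2
      exact hc (by rcases mul_eq_zero.mp h2 with h'' | h''; exact absurd h'' hs; exact h'')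
  have e1 := hQs 1 one_ne_zero
  have e2 := hQs 2 two_ne_zero
  have e3 := hQs 3 three_ne_zero
  rw [hQexp] at e1 e2 e3
  norm_num at e1 e2 e3
  apply hv0
  show Q v0 = 0
  linarith

section analysis
variable {n : ℕ} {F : Type*} [NormedAddCommGroup F] [NormedSpace ℝ F]

lemma vsc_slice_fderiv (g : ℝ × (Fin n → ℝ) × ℝ → ℝ) {Ω : Set (ℝ × (Fin n → ℝ) × ℝ)}
    (hΩ : IsOpen Ω) (hg : DifferentiableOn ℝ g Ω) (u : ℝ × (Fin n → ℝ) × ℝ)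
    (L : F →L[ℝ] ℝ × (Fin n → ℝ) × ℝ) {p : F} (hmem : u + L p ∈ Ω) (y : F) :
    fderiv ℝ (fun z => g (u + L z)) p y = fderiv ℝ g (u + L p) (L y) := by
  have hdg : DifferentiableAt ℝ g (u + L p) := hg.differentiableAt (hΩ.mem_nhds hmem)
  have haff : HasFDerivAt (fun z : F => u + L z) L p := L.hasFDerivAt.const_add u
  have hcomp : HasFDerivAt (fun z => g (u + L z)) ((fderiv ℝ g (u + L p)).comp L) p :=
    (hdg.hasFDerivAt).comp p haff
  rw [hcomp.fderiv]; rfl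

lemma vsc_slice_const (g : ℝ × (Fin n → ℝ) × ℝ → ℝ) {Ω : Set (ℝ × (Fin n → ℝ) × ℝ)}
    (hΩ : IsOpen Ω) (hg : DifferentiableOn ℝ g Ω) (u : ℝ × (Fin n → ℝ) × ℝ)
    (L : F →L[ℝ] ℝ × (Fin n → ℝ) × ℝ) {s : Set F} (hs : Convex ℝ s)
    (hmem : ∀ p ∈ s, u + L p ∈ Ω)
    (hder : ∀ p ∈ s, ∀ y : F, fderiv ℝ g (u + L p) (L y) = 0)
    {p p' : F} (hp : p ∈ s) (hp' : p' ∈ s) :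
    g (u + L p) = g (u + L p') := by
  have hderiv : ∀ z ∈ s, HasFDerivWithinAt (fun z => g (u + L z))
      ((fun _ : F => (0 : F →L[ℝ] ℝ)) z) s z := by
    intro z hz
    have hdg : DifferentiableAt ℝ g (u + L z) := hg.differentiableAt (hΩ.mem_nhds (hmem z hz))
    have haff : HasFDerivAt (fun z : F => u + L z) L z := L.hasFDerivAt.const_add u
    have hcomp : HasFDerivAt (fun z => g (u + L z)) ((fderiv ℝ g (u + L z)).comp L) z :=
      (hdg.hasFDerivAt).comp z haff
    have hzero : (fderiv ℝ g (u + L z)).comp L = 0 :=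
      ContinuousLinearMap.ext fun y => hder z hz y
    rw [hzero] at hcomp
    exact hcomp.hasFDerivWithinAt
  have hbound := hs.norm_image_sub_le_of_norm_hasFDerivWithin_le (C := 0) hderiv
    (fun z _ => by simp) hp hp'
  have : g (u + L p') - g (u + L p) = 0 := by
    have h0 : ‖g (u + L p') - g (u + L p)‖ ≤ 0 := by simpa using hbound
    simpa using norm_le_zero_iff.mp h0
  linarith [this]

lemma vsc_clm_apply (φ : (ℝ × (Fin n → ℝ) × ℝ) →L[ℝ] ℝ) (a : ℝ) (b : Fin n → ℝ) (c : ℝ) :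
    φ (a, b, c) = a * φ (1, 0, 0) + (∑ β : Fin n, b β * φ (0, Pi.single β 1, 0))
      + c * φ (0, 0, 1) := by
  have hsplit : ((a, b, c) : ℝ × (Fin n → ℝ) × ℝ)
      = (a, 0, 0) + (0, b, 0) + (0, 0, c) := by
    simp [Prod.ext_iff]
  have h1 : φ (a, 0, 0) = a * φ (1, 0, 0) := by
    have : ((a, 0, 0) : ℝ × (Fin n → ℝ) × ℝ) = a • (1, 0, 0) := by simp [Prod.ext_iff]
    rw [this, map_smul, smul_eq_mul]
  have h3 : φ ((0 : ℝ), (0 : Fin n → ℝ), c) = c * φ (0, 0, 1) := by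
    have : ((0, 0, c) : ℝ × (Fin n → ℝ) × ℝ) = c • (0, 0, 1) := by simp [Prod.ext_iff]
    rw [this, map_smul, smul_eq_mul]
  have h2 : φ ((0 : ℝ), b, (0 : ℝ)) = ∑ β : Fin n, b β * φ (0, Pi.single β 1, 0) := by
    set J : (Fin n → ℝ) →L[ℝ] ℝ × (Fin n → ℝ) × ℝ :=
      (0 : (Fin n → ℝ) →L[ℝ] ℝ).prod
        ((ContinuousLinearMap.id ℝ (Fin n → ℝ)).prod 0) with hJ
    have hJb : ∀ b' : Fin n → ℝ, J b' = (0, b', 0) := fun _ => rfl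
    have := LinearMap.pi_apply_eq_sum_univ
      ((φ.comp J).toLinearMap) b
    rw [ContinuousLinearMap.coe_coe] at this
    rw [show φ ((0 : ℝ), b, (0 : ℝ)) = (φ.comp J) b from rfl, this]
    refine Finset.sum_congr rfl fun β _ => ?_
    have hv : (fun j => if β = j then (1:ℝ) else 0) = (Pi.single β 1 : Fin n → ℝ) := by
      funext j; simp [Pi.single_apply, eq_comm]
    rw [smul_eq_mul, hv]
    rfl
  rw [hsplit, map_add, map_add, h1, h2, h3]

end analysis

section sums
variable {n : ℕ} (v : Fin n → ℝ)

lemma vsc_sum_merge (A B : Fin n → Fin n → ℝ) (e : ℝ) (α : Fin n) :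
    e * ((∑ κ : Fin n, A κ α * v κ) + (∑ lam : Fin n, B α lam * v lam))
      = ∑ κ : Fin n, v κ * (e * (A κ α + B α κ)) := by
  rw [← Finset.sum_add_distrib, Finset.mul_sum]
  exact Finset.sum_congr rfl fun κ _ => by ring

lemma vsc_swap1 (a : Fin n → ℝ) (E : Fin n → Fin n → ℝ) :
    (∑ α : Fin n, a α * (∑ κ : Fin n, v κ * E κ α))
      = ∑ κ : Fin n, v κ * (∑ α : Fin n, a α * E κ α) := by
  calc (∑ α : Fin n, a α * (∑ κ : Fin n, v κ * E κ α))
      = ∑ α : Fin n, ∑ κ : Fin n, a α * (v κ * E κ α) :=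
        Finset.sum_congr rfl fun α _ => Finset.mul_sum _ _ _
    _ = ∑ κ : Fin n, ∑ α : Fin n, a α * (v κ * E κ α) := Finset.sum_comm
    _ = ∑ κ : Fin n, v κ * (∑ α : Fin n, a α * E κ α) := by
        refine Finset.sum_congr rfl fun κ _ => ?_
        rw [Finset.mul_sum]
        exact Finset.sum_congr rfl fun α _ => by ring

lemma vsc_lin_sum (a : Fin n → ℝ) (A B : Fin n → Fin n → ℝ) (e : ℝ) :
    (∑ α : Fin n, a α * (e * ((∑ κ : Fin n, A κ α * v κ) + (∑ lam : Fin n, B α lam * v lam))))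
      = ∑ κ : Fin n, v κ * (∑ α : Fin n, a α * (e * (A κ α + B α κ))) := by
  calc (∑ α : Fin n, a α * (e * ((∑ κ : Fin n, A κ α * v κ) + (∑ lam : Fin n, B α lam * v lam))))
      = ∑ α : Fin n, a α * (∑ κ : Fin n, v κ * (e * (A κ α + B α κ))) :=
        Finset.sum_congr rfl fun α _ => by rw [vsc_sum_merge]
    _ = _ := vsc_swap1 v a _

lemma vsc_quad_sum2 (d : Fin n → Fin n → ℝ) (A B : Fin n → Fin n → ℝ) (e : ℝ) :
    (∑ α : Fin n, (∑ β : Fin n, v β * d α β) *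
        (e * ((∑ κ : Fin n, A κ α * v κ) + (∑ lam : Fin n, B α lam * v lam))))
      = ∑ β : Fin n, ∑ κ : Fin n, v β * v κ * (∑ α : Fin n, d α β * (e * (A κ α + B α κ))) := by
  calc (∑ α : Fin n, (∑ β : Fin n, v β * d α β) *
        (e * ((∑ κ : Fin n, A κ α * v κ) + (∑ lam : Fin n, B α lam * v lam))))
      = ∑ α : Fin n, (∑ β : Fin n, v β * d α β) * (∑ κ : Fin n, v κ * (e * (A κ α + B α κ))) :=
        Finset.sum_congr rfl fun α _ => by rw [vsc_sum_merge]
    _ = ∑ α : Fin n, ∑ β : Fin n, ∑ κ : Fin n, (v β * d α β) * (v κ * (e * (A κ α + B α κ))) :=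
        Finset.sum_congr rfl fun α _ => Finset.sum_mul_sum _ _ _ _
    _ = ∑ β : Fin n, ∑ α : Fin n, ∑ κ : Fin n, (v β * d α β) * (v κ * (e * (A κ α + B α κ))) :=
        Finset.sum_comm
    _ = ∑ β : Fin n, ∑ κ : Fin n, ∑ α : Fin n, (v β * d α β) * (v κ * (e * (A κ α + B α κ))) :=
        Finset.sum_congr rfl fun β _ => Finset.sum_comm
    _ = _ := by
        refine Finset.sum_congr rfl fun β _ => Finset.sum_congr rfl fun κ _ => ?_
        rw [Finset.mul_sum]
        exact Finset.sum_congr rfl fun α _ => by ring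

lemma vsc_coeff2 (E : Fin n → Fin n → ℝ) :
    (∑ κ : Fin n, v κ * (∑ α : Fin n, v α * E κ α))
      = ∑ μ : Fin n, ∑ ν : Fin n, v μ * v ν * E μ ν := by
  refine Finset.sum_congr rfl fun κ _ => ?_
  rw [Finset.mul_sum]
  exact Finset.sum_congr rfl fun α _ => by ring

lemma vsc_swap3 (a : Fin n → ℝ) (M : Fin n → Fin n → Fin n → ℝ) (e : ℝ) :
    (∑ α : Fin n, a α * (e * (∑ κ : Fin n, ∑ lam : Fin n, M α κ lam * v κ * v lam)))
      = ∑ κ : Fin n, ∑ lam : Fin n, v κ * v lam * (e * (∑ α : Fin n, a α * M α κ lam)) := by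
  calc (∑ α : Fin n, a α * (e * (∑ κ : Fin n, ∑ lam : Fin n, M α κ lam * v κ * v lam)))
      = ∑ α : Fin n, ∑ κ : Fin n, ∑ lam : Fin n, a α * (e * (M α κ lam * v κ * v lam)) := by
        simp only [Finset.mul_sum]
    _ = ∑ κ : Fin n, ∑ α : Fin n, ∑ lam : Fin n, a α * (e * (M α κ lam * v κ * v lam)) :=
        Finset.sum_comm
    _ = ∑ κ : Fin n, ∑ lam : Fin n, ∑ α : Fin n, a α * (e * (M α κ lam * v κ * v lam)) :=
        Finset.sum_congr rfl fun κ _ => Finset.sum_comm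
    _ = _ := by
        refine Finset.sum_congr rfl fun κ _ => Finset.sum_congr rfl fun lam _ => ?_
        rw [Finset.mul_sum, Finset.mul_sum]
        exact Finset.sum_congr rfl fun α _ => by ring

lemma vsc_pull (c : ℝ) (E : Fin n → Fin n → ℝ) :
    c * (∑ μ : Fin n, ∑ ν : Fin n, v μ * v ν * E μ ν)
      = ∑ μ : Fin n, ∑ ν : Fin n, v μ * v ν * (c * E μ ν) := by
  rw [Finset.mul_sum]
  refine Finset.sum_congr rfl fun μ _ => ?_
  rw [Finset.mul_sum]
  exact Finset.sum_congr rfl fun ν _ => by ring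

lemma vsc_add2 (E F' : Fin n → Fin n → ℝ) :
    (∑ μ : Fin n, ∑ ν : Fin n, v μ * v ν * E μ ν)
      + (∑ μ : Fin n, ∑ ν : Fin n, v μ * v ν * F' μ ν)
      = ∑ μ : Fin n, ∑ ν : Fin n, v μ * v ν * (E μ ν + F' μ ν) := by
  rw [← Finset.sum_add_distrib]
  refine Finset.sum_congr rfl fun μ _ => ?_
  rw [← Finset.sum_add_distrib]
  exact Finset.sum_congr rfl fun ν _ => by ring

lemma vsc_GVcoeff (Gq : Fin n → Fin n → ℝ) :
    (∑ κ : Fin n, ∑ lam : Fin n, Gq κ lam * v κ * v lam)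
      = ∑ μ : Fin n, ∑ ν : Fin n, v μ * v ν * Gq μ ν :=
  Finset.sum_congr rfl fun κ _ => Finset.sum_congr rfl fun lam _ => by ring

lemma vsc_pull1 (c : ℝ) (L : Fin n → ℝ) :
    c * (∑ κ : Fin n, v κ * L κ) = ∑ κ : Fin n, v κ * (c * L κ) := by
  rw [Finset.mul_sum]
  exact Finset.sum_congr rfl fun κ _ => by ring

lemma vsc_add1 (L M : Fin n → ℝ) :
    (∑ κ : Fin n, v κ * L κ) + (∑ κ : Fin n, v κ * M κ)
      = ∑ κ : Fin n, v κ * (L κ + M κ) := by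
  rw [← Finset.sum_add_distrib]
  exact Finset.sum_congr rfl fun κ _ => by ring

lemma vsc_scale1 (s : ℝ) (L : Fin n → ℝ) :
    (∑ κ : Fin n, (s • v) κ * L κ) = s * ∑ κ : Fin n, v κ * L κ := by
  rw [Finset.mul_sum]
  exact Finset.sum_congr rfl fun κ _ => by
    simp only [Pi.smul_apply, smul_eq_mul]; ring

lemma vsc_scale2 (s : ℝ) (E : Fin n → Fin n → ℝ) :
    (∑ μ : Fin n, ∑ ν : Fin n, (s • v) μ * (s • v) ν * E μ ν)
      = s ^ 2 * ∑ μ : Fin n, ∑ ν : Fin n, v μ * v ν * E μ ν := by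
  rw [Finset.mul_sum]
  refine Finset.sum_congr rfl fun μ _ => ?_
  rw [Finset.mul_sum]
  exact Finset.sum_congr rfl fun ν _ => by
    simp only [Pi.smul_apply, smul_eq_mul]; ring

end sums

section sums2
variable {n : ℕ} (v : Fin n → ℝ)

lemma vsc_neg1 (L : Fin n → ℝ) :
    -(∑ κ : Fin n, v κ * L κ) = ∑ κ : Fin n, v κ * (-(L κ)) := by
  rw [← Finset.sum_neg_distrib]
  exact Finset.sum_congr rfl fun κ _ => by ring

lemma vsc_symm2 (e : ℝ) (Gq : Fin n → Fin n → ℝ) :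
    (∑ μ : Fin n, ∑ ν : Fin n, v μ * v ν * (e * Gq ν μ))
      = ∑ μ : Fin n, ∑ ν : Fin n, v μ * v ν * (e * Gq μ ν) := by
  rw [Finset.sum_comm]
  exact Finset.sum_congr rfl fun μ _ => Finset.sum_congr rfl fun ν _ => by ring

lemma vsc_Esplit (e : ℝ) (Gq : Fin n → Fin n → ℝ) :
    (∑ μ : Fin n, ∑ ν : Fin n, v μ * v ν * (e * (Gq μ ν + Gq ν μ)))
      = 2 * e * (∑ μ : Fin n, ∑ ν : Fin n, v μ * v ν * Gq μ ν) := by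
  have h1 : (∑ μ : Fin n, ∑ ν : Fin n, v μ * v ν * (e * (Gq μ ν + Gq ν μ)))
      = (∑ μ : Fin n, ∑ ν : Fin n, v μ * v ν * (e * Gq μ ν))
        + (∑ μ : Fin n, ∑ ν : Fin n, v μ * v ν * (e * Gq ν μ)) := by
    rw [vsc_add2]
    exact Finset.sum_congr rfl fun μ _ => Finset.sum_congr rfl fun ν _ => by ring
  rw [h1, vsc_symm2 v e Gq, ← vsc_pull v e Gq]
  ring
end sums2

noncomputable def vscC {n : ℕ} (V : (Fin n → ℝ) → ℝ) (χ ω f : ℝ × (Fin n → ℝ) × ℝ → ℝ)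
    (ξ : ℝ × (Fin n → ℝ) × ℝ → Fin n → ℝ) (x : ℝ × (Fin n → ℝ) × ℝ) : ℝ :=
  (∑ α : Fin n, ξ x α * (-(x.2.2) * pd V α x.2.1)) + (-(ω x * V x.2.1))
    + (-(x.2.2 * V x.2.1)) * Dt χ x + (-(Dt f x))

noncomputable def vscL {n : ℕ} (G : (Fin n → ℝ) → Fin n → Fin n → ℝ)
    (V : (Fin n → ℝ) → ℝ) (χ f : ℝ × (Fin n → ℝ) × ℝ → ℝ)
    (ξ : ℝ × (Fin n → ℝ) × ℝ → Fin n → ℝ) (x : ℝ × (Fin n → ℝ) × ℝ) (κ : Fin n) : ℝ :=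
  (∑ α : Fin n, Dt (fun y => ξ y α) x * (1 / (2 * x.2.2) * (G x.2.1 κ α + G x.2.1 α κ)))
    + (-(x.2.2 * V x.2.1)) * Dq χ κ x + (-(Dq f κ x))

noncomputable def vscM {n : ℕ} (G : (Fin n → ℝ) → Fin n → Fin n → ℝ)
    (ξ : ℝ × (Fin n → ℝ) × ℝ → Fin n → ℝ) (x : ℝ × (Fin n → ℝ) × ℝ) (κ : Fin n) : ℝ :=
  (∑ α : Fin n, DN (fun y => ξ y α) x * (1 / (2 * x.2.2) * (G x.2.1 κ α + G x.2.1 α κ)))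

noncomputable def vscW {n : ℕ} (V : (Fin n → ℝ) → ℝ) (χ f : ℝ × (Fin n → ℝ) × ℝ → ℝ)
    (x : ℝ × (Fin n → ℝ) × ℝ) : ℝ :=
  (-(x.2.2 * V x.2.1)) * DN χ x + (-(DN f x))

noncomputable def vscT {n : ℕ} (G : (Fin n → ℝ) → Fin n → Fin n → ℝ)
    (χ ω : ℝ × (Fin n → ℝ) × ℝ → ℝ) (ξ : ℝ × (Fin n → ℝ) × ℝ → Fin n → ℝ)
    (x : ℝ × (Fin n → ℝ) × ℝ) (μ ν : Fin n) : ℝ :=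
  1 / (2 * x.2.2) * (∑ α : Fin n, ξ x α * pd (fun p => G p μ ν) α x.2.1)
    + (-(1 / (2 * x.2.2 ^ 2)) * ω x) * G x.2.1 μ ν
    + (∑ α : Fin n, Dq (fun y => ξ y α) μ x * (1 / (2 * x.2.2) * (G x.2.1 ν α + G x.2.1 α ν)))
    + (-(Dt χ x)) * (1 / (2 * x.2.2) * (G x.2.1 μ ν + G x.2.1 ν μ))
    + (1 / (2 * x.2.2) * Dt χ x) * G x.2.1 μ ν

lemma vsc_struct {n : ℕ} (G : (Fin n → ℝ) → Fin n → Fin n → ℝ) (V : (Fin n → ℝ) → ℝ)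
    (χ ω f : ℝ × (Fin n → ℝ) × ℝ → ℝ) (ξ : ℝ × (Fin n → ℝ) × ℝ → Fin n → ℝ)
    (x : ℝ × (Fin n → ℝ) × ℝ) (v : Fin n → ℝ) (w : ℝ)
    (heq : (∑ α : Fin n, ξ x α *
          ((1 / (2 * x.2.2)) * (∑ κ : Fin n, ∑ lam : Fin n,
              pd (fun p => G p κ lam) α x.2.1 * v κ * v lam)
            - x.2.2 * pd V α x.2.1))
      + ω x * (-(1 / (2 * x.2.2 ^ 2)) * (∑ κ : Fin n, ∑ lam : Fin n,
              G x.2.1 κ lam * v κ * v lam) - V x.2.1)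
      + (∑ α : Fin n, (Dtot (fun y => ξ y α) x v w - v α * Dtot χ x v w) *
          ((1 / (2 * x.2.2)) * ((∑ κ : Fin n, G x.2.1 κ α * v κ)
            + (∑ lam : Fin n, G x.2.1 α lam * v lam))))
      + ((1 / (2 * x.2.2)) * (∑ κ : Fin n, ∑ lam : Fin n, G x.2.1 κ lam * v κ * v lam)
          - x.2.2 * V x.2.1) * Dtot χ x v w
      = Dtot f x v w) :
    vscC V χ ω f ξ x
      + (∑ κ : Fin n, v κ * vscL G V χ f ξ x κ)
      + (∑ μ : Fin n, ∑ ν : Fin n, v μ * v ν * vscT G χ ω ξ x μ ν)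
      + (∑ μ : Fin n, ∑ ν : Fin n, v μ * v ν * G x.2.1 μ ν) * (∑ β : Fin n, v β * Dq χ β x) * (-(1 / (2 * x.2.2)))
      + w * ((∑ κ : Fin n, v κ * vscM G ξ x κ)
          + (∑ μ : Fin n, ∑ ν : Fin n, v μ * v ν * G x.2.1 μ ν) * (-(1 / (2 * x.2.2))) * DN χ x
          + vscW V χ f x) = 0 := by
  simp only [Dtot] at heq
  -- split the big α-sum into six pieces
  have hc3 : (∑ α : Fin n, Dt (fun y => ξ y α) x * (1 / (2 * x.2.2) * ((∑ κ : Fin n, G x.2.1 κ α * v κ) + (∑ lam : Fin n, G x.2.1 α lam * v lam)))) + (∑ α : Fin n, (∑ β : Fin n, v β * Dq (fun y => ξ y α) β x) * (1 / (2 * x.2.2) * ((∑ κ : Fin n, G x.2.1 κ α * v κ) + (∑ lam : Fin n, G x.2.1 α lam * v lam)))) + (w * (∑ α : Fin n, DN (fun y => ξ y α) x * (1 / (2 * x.2.2) * ((∑ κ : Fin n, G x.2.1 κ α * v κ) + (∑ lam : Fin n, G x.2.1 α lam * v lam))))) + ((-(Dt χ x)) * (∑ α : Fin n, v α * (1 /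 (2 * x.2.2) * ((∑ κ : Fin n, G x.2.1 κ α * v κ) + (∑ lam : Fin n, G x.2.1 α lam * v lam))))) + ((-(∑ β : Fin n, v β * Dq χ β x)) * (∑ α : Fin n, v α * (1 / (2 * x.2.2) * ((∑ κ : Fin n, G x.2.1 κ α * v κ) + (∑ lam : Fin n, G x.2.1 α lam * v lam))))) + ((-(w * DN χ x)) * (∑ α : Fin n, v α * (1 / (2 * x.2.2) * ((∑ κ : Fin n, G x.2.1 κ α * v κ) + (∑ lam : Fin n, G x.2.1 α lam * v lam)))))
      = (∑ α : Fin n, (Dt (fun y => ξ y α) x + (∑ β : Fin n, v β * Dq (fun y => ξ y α) β x)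
          + w * DN (fun y => ξ y α) x
          - v α * (Dt χ x + (∑ β : Fin n, v β * Dq χ β x) + w * DN χ x)) *
          ((1 / (2 * x.2.2)) * ((∑ κ : Fin n, G x.2.1 κ α * v κ)
            + (∑ lam : Fin n, G x.2.1 α lam * v lam)))) := by
    rw [Finset.mul_sum, Finset.mul_sum, Finset.mul_sum, Finset.mul_sum]
    rw [← Finset.sum_add_distrib, ← Finset.sum_add_distrib, ← Finset.sum_add_distrib,
      ← Finset.sum_add_distrib, ← Finset.sum_add_distrib]
    exact Finset.sum_congr rfl fun α _ => by ring
  rw [← hc3] at heq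
  -- term 1 split
  have hT1 : (∑ α : Fin n, ξ x α *
        ((1 / (2 * x.2.2)) * (∑ κ : Fin n, ∑ lam : Fin n,
            pd (fun p => G p κ lam) α x.2.1 * v κ * v lam)
          - x.2.2 * pd V α x.2.1))
      = (∑ κ : Fin n, ∑ lam : Fin n, v κ * v lam *
          (1 / (2 * x.2.2) * (∑ α : Fin n, ξ x α * pd (fun p => G p κ lam) α x.2.1)))
        + (∑ α : Fin n, ξ x α * (-(x.2.2) * pd V α x.2.1)) := by
    rw [← vsc_swap3 v (fun α => ξ x α)
      (fun α κ lam => pd (fun p => G p κ lam) α x.2.1) (1 / (2 * x.2.2)),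
      ← Finset.sum_add_distrib]
    exact Finset.sum_congr rfl fun α _ => by ring
  rw [hT1] at heq
  -- term 2 split
  have hT2 : ω x * (-(1 / (2 * x.2.2 ^ 2)) * (∑ κ : Fin n, ∑ lam : Fin n, G x.2.1 κ lam * v κ * v lam) - V x.2.1)
      = (∑ μ : Fin n, ∑ ν : Fin n, v μ * v ν * ((-(1 / (2 * x.2.2 ^ 2)) * ω x) * G x.2.1 μ ν)) + (-(ω x * V x.2.1)) := by
    rw [← vsc_pull v ((-(1 / (2 * x.2.2 ^ 2))) * ω x) (G x.2.1),
      ← vsc_GVcoeff v (G x.2.1)]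
    ring
  rw [hT2] at heq
  -- A1, A2, A3 conversions
  rw [vsc_lin_sum v (fun α => Dt (fun y => ξ y α) x) (G x.2.1) (G x.2.1) (1 / (2 * x.2.2))] at heq
  rw [vsc_quad_sum2 v (fun α β => Dq (fun y => ξ y α) β x) (G x.2.1) (G x.2.1) (1 / (2 * x.2.2))] at heq
  rw [vsc_lin_sum v (fun α => DN (fun y => ξ y α) x) (G x.2.1) (G x.2.1) (1 / (2 * x.2.2))] at heq
  -- Sv conversion
  have hSv : (∑ α : Fin n, v α * (1 / (2 * x.2.2) * ((∑ κ : Fin n, G x.2.1 κ α * v κ) + (∑ lam : Fin n, G x.2.1 α lam * v lam)))) = ∑ μ : Fin n, ∑ ν : Fin n, v μ * v ν *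
      (1 / (2 * x.2.2) * (G x.2.1 μ ν + G x.2.1 ν μ)) :=
    (vsc_lin_sum v v (G x.2.1) (G x.2.1) (1 / (2 * x.2.2))).trans
      (vsc_coeff2 v (fun κ α => 1 / (2 * x.2.2) * (G x.2.1 κ α + G x.2.1 α κ)))
  rw [hSv] at heq
  rw [vsc_pull v (-(Dt χ x)) (fun μ ν => 1 / (2 * x.2.2) * (G x.2.1 μ ν + G x.2.1 ν μ))] at heq
  rw [vsc_Esplit v (1 / (2 * x.2.2)) (G x.2.1)] at heq
  rw [vsc_GVcoeff v (G x.2.1)] at heq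
  -- now atomize the goal
  simp only [vscC, vscL, vscM, vscW, vscT]
  rw [← vsc_add1 v (fun κ => (∑ α : Fin n, Dt (fun y => ξ y α) x * (1 / (2 * x.2.2) * (G x.2.1 κ α + G x.2.1 α κ)))
      + (-(x.2.2 * V x.2.1)) * Dq χ κ x) (fun κ => -(Dq f κ x))]
  rw [← vsc_add1 v (fun κ => (∑ α : Fin n, Dt (fun y => ξ y α) x * (1 / (2 * x.2.2) * (G x.2.1 κ α + G x.2.1 α κ)))) (fun κ => (-(x.2.2 * V x.2.1)) * Dq χ κ x)]
  rw [← vsc_pull1 v (-(x.2.2 * V x.2.1)) (fun κ => Dq χ κ x)]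
  rw [← vsc_neg1 v (fun κ => Dq f κ x)]
  rw [← vsc_add2 v (fun μ ν => 1 / (2 * x.2.2) * (∑ α : Fin n, ξ x α * pd (fun p => G p μ ν) α x.2.1) + (-(1 / (2 * x.2.2 ^ 2)) * ω x) * G x.2.1 μ ν + (∑ α : Fin n, Dq (fun y => ξ y α) μ x * (1 / (2 * x.2.2) * (G x.2.1 ν α + G x.2.1 α ν))) + (-(Dt χ x)) * (1 / (2 * x.2.2) * (G x.2.1 μ ν + G x.2.1 ν μ))) (fun μ ν => (1 / (2 * x.2.2) * Dt χ x) * G x.2.1 μ ν)]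
  rw [← vsc_add2 v (fun μ ν => 1 / (2 * x.2.2) * (∑ α : Fin n, ξ x α * pd (fun p => G p μ ν) α x.2.1) + (-(1 / (2 * x.2.2 ^ 2)) * ω x) * G x.2.1 μ ν + (∑ α : Fin n, Dq (fun y => ξ y α) μ x * (1 / (2 * x.2.2) * (G x.2.1 ν α + G x.2.1 α ν)))) (fun μ ν => (-(Dt χ x)) * (1 / (2 * x.2.2) * (G x.2.1 μ ν + G x.2.1 ν μ)))]
  rw [← vsc_add2 v (fun μ ν => 1 / (2 * x.2.2) * (∑ α : Fin n, ξ x α * pd (fun p => G p μ ν) α x.2.1) + (-(1 / (2 * x.2.2 ^ 2)) * ω x) * G x.2.1 μ ν) (fun μ ν => (∑ α : Fin n, Dq (fun y => ξ y α) μ x * (1 / (2 * x.2.2) * (G x.2.1 ν α + G x.2.1 α ν))))]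
  rw [← vsc_add2 v (fun μ ν => 1 / (2 * x.2.2) * (∑ α : Fin n, ξ x α * pd (fun p => G p μ ν) α x.2.1)) (fun μ ν => (-(1 / (2 * x.2.2 ^ 2)) * ω x) * G x.2.1 μ ν)]
  rw [← vsc_pull v (1 / (2 * x.2.2) * Dt χ x) (G x.2.1)]
  linear_combination heq

lemma vsc_extract {n : ℕ} (hn : 1 ≤ n) (G : (Fin n → ℝ) → Fin n → Fin n → ℝ)
    (V : (Fin n → ℝ) → ℝ) (χ ω f : ℝ × (Fin n → ℝ) × ℝ → ℝ)
    (ξ : ℝ × (Fin n → ℝ) × ℝ → Fin n → ℝ) (x : ℝ × (Fin n → ℝ) × ℝ) (hx : 0 < x.2.2)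
    (hGsymm : ∀ q μ ν, G q μ ν = G q ν μ)
    (hGinv : (Matrix.of fun μ ν => G x.2.1 μ ν).det ≠ 0)
    (hall : ∀ (v : Fin n → ℝ) (w : ℝ),
      vscC V χ ω f ξ x
        + (∑ κ : Fin n, v κ * vscL G V χ f ξ x κ)
        + (∑ μ : Fin n, ∑ ν : Fin n, v μ * v ν * vscT G χ ω ξ x μ ν)
        + (∑ μ : Fin n, ∑ ν : Fin n, v μ * v ν * G x.2.1 μ ν)
            * (∑ β : Fin n, v β * Dq χ β x) * (-(1 / (2 * x.2.2)))
        + w * ((∑ κ : Fin n, v κ * vscM G ξ x κ)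
            + (∑ μ : Fin n, ∑ ν : Fin n, v μ * v ν * G x.2.1 μ ν)
                * (-(1 / (2 * x.2.2))) * DN χ x
            + vscW V χ f x) = 0) :
    vscC V χ ω f ξ x = 0
    ∧ (∀ κ, vscL G V χ f ξ x κ = 0)
    ∧ (∀ μ ν, vscT G χ ω ξ x μ ν + vscT G χ ω ξ x ν μ = 0)
    ∧ (∀ β, Dq χ β x = 0)
    ∧ DN χ x = 0
    ∧ DN f x = 0
    ∧ (∀ α, DN (fun y => ξ y α) x = 0) := by
  have hN : x.2.2 ≠ 0 := ne_of_gt hx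
  have hquadne : ∃ v : Fin n → ℝ,
      (∑ μ : Fin n, ∑ ν : Fin n, v μ * v ν * G x.2.1 μ ν) ≠ 0 :=
    vsc_exists_quad_ne hn (G x.2.1) (fun μ ν => hGsymm x.2.1 μ ν) hGinv
  -- w-linear part
  have hB : ∀ v : Fin n → ℝ,
      (∑ κ : Fin n, v κ * vscM G ξ x κ)
        + (∑ μ : Fin n, ∑ ν : Fin n, v μ * v ν * G x.2.1 μ ν)
            * (-(1 / (2 * x.2.2))) * DN χ x
        + vscW V χ f x = 0 := fun v => by
    linear_combination (hall v 1) - (hall v 0)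
  have hP : ∀ v : Fin n → ℝ,
      vscC V χ ω f ξ x
        + (∑ κ : Fin n, v κ * vscL G V χ f ξ x κ)
        + (∑ μ : Fin n, ∑ ν : Fin n, v μ * v ν * vscT G χ ω ξ x μ ν)
        + (∑ μ : Fin n, ∑ ν : Fin n, v μ * v ν * G x.2.1 μ ν)
            * (∑ β : Fin n, v β * Dq χ β x) * (-(1 / (2 * x.2.2))) = 0 := fun v => by
    linear_combination (hall v 0)
  have hPs : ∀ (v : Fin n → ℝ) (s : ℝ),
      vscC V χ ω f ξ x
        + s * (∑ κ : Fin n, v κ * vscL G V χ f ξ x κ)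
        + s ^ 2 * (∑ μ : Fin n, ∑ ν : Fin n, v μ * v ν * vscT G χ ω ξ x μ ν)
        + (s ^ 2 * (∑ μ : Fin n, ∑ ν : Fin n, v μ * v ν * G x.2.1 μ ν))
            * (s * (∑ β : Fin n, v β * Dq χ β x)) * (-(1 / (2 * x.2.2))) = 0 := by
    intro v s
    have h := hP (s • v)
    rwa [vsc_scale1 v s (fun κ => vscL G V χ f ξ x κ),
      vsc_scale2 v s (fun μ ν => vscT G χ ω ξ x μ ν),
      vsc_scale2 v s (G x.2.1),
      vsc_scale1 v s (fun β => Dq χ β x)] at h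
  have hC : vscC V χ ω f ξ x = 0 := by linear_combination (hPs 0 0)
  have hLall : ∀ v : Fin n → ℝ, (∑ κ : Fin n, v κ * vscL G V χ f ξ x κ) = 0 := by
    intro v
    have q1 := hPs v 1
    have q2 := hPs v (-1)
    have q3 := hPs v 2
    have r1 : vscC V χ ω f ξ x
        + (∑ κ : Fin n, v κ * vscL G V χ f ξ x κ)
        + (∑ μ : Fin n, ∑ ν : Fin n, v μ * v ν * vscT G χ ω ξ x μ ν)
        + (∑ μ : Fin n, ∑ ν : Fin n, v μ * v ν * G x.2.1 μ ν)
            * (∑ β : Fin n, v β * Dq χ β x) * (-(1 / (2 * x.2.2))) = 0 := by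
      linear_combination q1
    have r2 : vscC V χ ω f ξ x
        - (∑ κ : Fin n, v κ * vscL G V χ f ξ x κ)
        + (∑ μ : Fin n, ∑ ν : Fin n, v μ * v ν * vscT G χ ω ξ x μ ν)
        - (∑ μ : Fin n, ∑ ν : Fin n, v μ * v ν * G x.2.1 μ ν)
            * (∑ β : Fin n, v β * Dq χ β x) * (-(1 / (2 * x.2.2))) = 0 := by
      linear_combination q2
    have r3 : vscC V χ ω f ξ x
        + 2 * (∑ κ : Fin n, v κ * vscL G V χ f ξ x κ)
        + 4 * (∑ μ : Fin n, ∑ ν : Fin n, v μ * v ν * vscT G χ ω ξ x μ ν)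
        + 8 * ((∑ μ : Fin n, ∑ ν : Fin n, v μ * v ν * G x.2.1 μ ν)
            * (∑ β : Fin n, v β * Dq χ β x) * (-(1 / (2 * x.2.2)))) = 0 := by
      linear_combination q3
    linarith [r1, r2, r3, hC]
  have hQall : ∀ v : Fin n → ℝ,
      (∑ μ : Fin n, ∑ ν : Fin n, v μ * v ν * vscT G χ ω ξ x μ ν) = 0 := by
    intro v
    have q1 := hPs v 1
    have q2 := hPs v (-1)
    have r1 : vscC V χ ω f ξ x
        + (∑ κ : Fin n, v κ * vscL G V χ f ξ x κ)
        + (∑ μ : Fin n, ∑ ν : Fin n, v μ * v ν * vscT G χ ω ξ x μ ν)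
        + (∑ μ : Fin n, ∑ ν : Fin n, v μ * v ν * G x.2.1 μ ν)
            * (∑ β : Fin n, v β * Dq χ β x) * (-(1 / (2 * x.2.2))) = 0 := by
      linear_combination q1
    have r2 : vscC V χ ω f ξ x
        - (∑ κ : Fin n, v κ * vscL G V χ f ξ x κ)
        + (∑ μ : Fin n, ∑ ν : Fin n, v μ * v ν * vscT G χ ω ξ x μ ν)
        - (∑ μ : Fin n, ∑ ν : Fin n, v μ * v ν * G x.2.1 μ ν)
            * (∑ β : Fin n, v β * Dq χ β x) * (-(1 / (2 * x.2.2))) = 0 := by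
      linear_combination q2
    linarith [r1, r2, hC]
  have hKall : ∀ v : Fin n → ℝ,
      (∑ μ : Fin n, ∑ ν : Fin n, v μ * v ν * G x.2.1 μ ν)
        * (∑ β : Fin n, v β * Dq χ β x) = 0 := by
    intro v
    have r1 := hP v
    rw [hC, hLall v, hQall v] at r1
    have r2 : (∑ μ : Fin n, ∑ ν : Fin n, v μ * v ν * G x.2.1 μ ν)
        * (∑ β : Fin n, v β * Dq χ β x) * (-(1 / (2 * x.2.2))) = 0 := by
      linear_combination r1
    have hne : (-(1 / (2 * x.2.2))) ≠ 0 := by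
      simp only [ne_eq, neg_eq_zero, div_eq_zero_iff]
      push_neg
      constructor
      · norm_num
      · intro h; exact absurd (by linarith : x.2.2 = 0) hN
    rcases mul_eq_zero.mp r2 with h' | h'
    · exact h'
    · exact absurd h' hne
  have hDqχ : ∀ β, Dq χ β x = 0 :=
    vsc_cubic_zero (G x.2.1) (fun β => Dq χ β x) hquadne hKall
  -- w-part
  have hBs : ∀ (v : Fin n → ℝ) (s : ℝ),
      s * (∑ κ : Fin n, v κ * vscM G ξ x κ)
        + (s ^ 2 * (∑ μ : Fin n, ∑ ν : Fin n, v μ * v ν * G x.2.1 μ ν))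
            * (-(1 / (2 * x.2.2))) * DN χ x
        + vscW V χ f x = 0 := by
    intro v s
    have h := hB (s • v)
    rwa [vsc_scale1 v s (fun κ => vscM G ξ x κ),
      vsc_scale2 v s (G x.2.1)] at h
  have hW : vscW V χ f x = 0 := by linear_combination (hBs 0 0)
  have hMall : ∀ v : Fin n → ℝ, (∑ κ : Fin n, v κ * vscM G ξ x κ) = 0 := by
    intro v
    have q1 := hBs v 1
    have q2 := hBs v (-1)
    have r1 : (∑ κ : Fin n, v κ * vscM G ξ x κ)
        + (∑ μ : Fin n, ∑ ν : Fin n, v μ * v ν * G x.2.1 μ ν)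
            * (-(1 / (2 * x.2.2))) * DN χ x + vscW V χ f x = 0 := by
      linear_combination q1
    have r2 : -(∑ κ : Fin n, v κ * vscM G ξ x κ)
        + (∑ μ : Fin n, ∑ ν : Fin n, v μ * v ν * G x.2.1 μ ν)
            * (-(1 / (2 * x.2.2))) * DN χ x + vscW V χ f x = 0 := by
      linear_combination q2
    linarith [r1, r2]
  have hDNχ : DN χ x = 0 := by
    obtain ⟨v0, hv0⟩ := hquadne
    have r1 := hBs v0 1
    rw [hMall v0, hW] at r1
    have r2 : (∑ μ : Fin n, ∑ ν : Fin n, v0 μ * v0 ν * G x.2.1 μ ν)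
        * ((-(1 / (2 * x.2.2))) * DN χ x) = 0 := by linear_combination r1
    rcases mul_eq_zero.mp r2 with h' | h'
    · exact absurd h' hv0
    · rcases mul_eq_zero.mp h' with h'' | h''
      · exfalso
        rw [neg_eq_zero, div_eq_zero_iff] at h''
        rcases h'' with h3 | h3
        · norm_num at h3
        · exact hN (by linarith)
      · exact h''
  have hDNf : DN f x = 0 := by
    have := hW
    simp only [vscW] at this
    rw [hDNχ] at this
    linarith [this]
  have hDNξ : ∀ α, DN (fun y => ξ y α) x = 0 := by
    have hM : ∀ κ, vscM G ξ x κ = 0 :=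
      vsc_linear_zero (fun κ => vscM G ξ x κ) hMall
    have hsum : ∀ κ, (∑ α : Fin n, DN (fun y => ξ y α) x * G x.2.1 α κ) = 0 := by
      intro κ
      have h1 : vscM G ξ x κ
          = (∑ α : Fin n, DN (fun y => ξ y α) x * G x.2.1 α κ) * (2 * (1 / (2 * x.2.2))) := by
        simp only [vscM]
        rw [Finset.sum_mul]
        refine Finset.sum_congr rfl fun α _ => ?_
        rw [hGsymm x.2.1 κ α]
        ring
      have h2 := hM κ
      rw [h1] at h2
      rcases mul_eq_zero.mp h2 with h' | h'
      · exact h'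
      · exfalso
        have : (1 : ℝ) / (2 * x.2.2) ≠ 0 := by
          rw [ne_eq, div_eq_zero_iff]
          push_neg
          exact ⟨by norm_num, by intro h; exact hN (by linarith)⟩
        rcases mul_eq_zero.mp h' with h'' | h''
        · norm_num at h''
        · exact this h''
    exact vsc_vec_zero (fun α κ => G x.2.1 α κ) hGinv _ hsum
  exact ⟨hC, vsc_linear_zero _ hLall, vsc_quad_zero _ hQall, hDqχ, hDNχ, hDNf, hDNξ⟩

lemma vsc_exists_entry {n : ℕ} (hn : 1 ≤ n) (M : Fin n → Fin n → ℝ)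
    (hdet : (Matrix.of fun μ ν => M μ ν).det ≠ 0) : ∃ μ ν, M μ ν ≠ 0 := by
  by_contra hcon
  push_neg at hcon
  apply hdet
  have hM0 : (Matrix.of fun μ ν => M μ ν) = 0 := by
    ext μ ν
    simpa using hcon μ ν
  rw [hM0]
  have : Nonempty (Fin n) := ⟨⟨0, hn⟩⟩
  simp [Matrix.det_zero]

section slices
variable {n : ℕ}

lemma vsc_isOpen : IsOpen {x : ℝ × (Fin n → ℝ) × ℝ | 0 < x.2.2} :=
  isOpen_lt continuous_const (continuous_snd.comp continuous_snd)

lemma vsc_Dt_eq (g : ℝ × (Fin n → ℝ) × ℝ → ℝ)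
    (hg : DifferentiableOn ℝ g {x : ℝ × (Fin n → ℝ) × ℝ | 0 < x.2.2})
    (t : ℝ) (q : Fin n → ℝ) (N : ℝ) (hN : 0 < N) :
    Dt g (t, q, N) = fderiv ℝ (fun s => g (s, q, N)) t 1 := by
  set L : ℝ →L[ℝ] ℝ × (Fin n → ℝ) × ℝ :=
    (ContinuousLinearMap.id ℝ ℝ).prod 0 with hL
  have hpt : ∀ s : ℝ, ((0, q, N) : ℝ × (Fin n → ℝ) × ℝ) + L s = (s, q, N) := by
    intro s
    have : L s = (s, 0, 0) := rfl
    rw [this]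
    simp [Prod.ext_iff]
  have hmem : ((0, q, N) : ℝ × (Fin n → ℝ) × ℝ) + L t ∈
      {x : ℝ × (Fin n → ℝ) × ℝ | 0 < x.2.2} := by
    rw [hpt]; exact hN
  have h := vsc_slice_fderiv g vsc_isOpen hg ((0, q, N) : ℝ × (Fin n → ℝ) × ℝ) L hmem 1
  have hfun : (fun z : ℝ => g (((0, q, N) : ℝ × (Fin n → ℝ) × ℝ) + L z))
      = fun s : ℝ => g (s, q, N) := by
    funext z; rw [hpt]
  rw [hfun, hpt] at h
  have hL1 : L 1 = ((1 : ℝ), (0 : Fin n → ℝ), (0 : ℝ)) := rfl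
  rw [hL1] at h
  exact h.symm

lemma vsc_Dq_eq (g : ℝ × (Fin n → ℝ) × ℝ → ℝ)
    (hg : DifferentiableOn ℝ g {x : ℝ × (Fin n → ℝ) × ℝ | 0 < x.2.2})
    (t : ℝ) (q : Fin n → ℝ) (N : ℝ) (hN : 0 < N) (κ : Fin n) :
    Dq g κ (t, q, N) = fderiv ℝ (fun p => g (t, p, N)) q (Pi.single κ 1) := by
  set L : (Fin n → ℝ) →L[ℝ] ℝ × (Fin n → ℝ) × ℝ :=
    (0 : (Fin n → ℝ) →L[ℝ] ℝ).prod ((ContinuousLinearMap.id ℝ (Fin n → ℝ)).prod 0) with hL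
  have hpt : ∀ p : Fin n → ℝ, ((t, 0, N) : ℝ × (Fin n → ℝ) × ℝ) + L p = (t, p, N) := by
    intro p
    have : L p = (0, p, 0) := rfl
    rw [this]
    simp [Prod.ext_iff]
  have hmem : ((t, 0, N) : ℝ × (Fin n → ℝ) × ℝ) + L q ∈
      {x : ℝ × (Fin n → ℝ) × ℝ | 0 < x.2.2} := by
    rw [hpt]; exact hN
  have h := vsc_slice_fderiv g vsc_isOpen hg ((t, 0, N) : ℝ × (Fin n → ℝ) × ℝ) L hmem
    (Pi.single κ 1)
  have hfun : (fun z : Fin n → ℝ => g (((t, 0, N) : ℝ × (Fin n → ℝ) × ℝ) + L z))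
      = fun p : Fin n → ℝ => g (t, p, N) := by
    funext z; rw [hpt]
  rw [hfun, hpt] at h
  have hL1 : L (Pi.single κ 1) = ((0 : ℝ), (Pi.single κ 1 : Fin n → ℝ), (0 : ℝ)) := rfl
  rw [hL1] at h
  exact h.symm

end slices
/-- consequences of the variational-symmetry criterion
`pr¹X(L) + L·D(χ) = D(f)` for the minisuperspace Lagrangian
`L = (1/(2N)) Σ G_{κλ}(q) v^κ v^λ − N V(q)`. -/
theorem variational_symmetry_criterion_consequences (n : ℕ) (hn : 1 ≤ n)
    (G : (Fin n → ℝ) → Fin n → Fin n → ℝ) (V : (Fin n → ℝ) → ℝ)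
    (hGsmooth : ∀ μ ν, ContDiff ℝ (⊤ : ℕ∞) fun q => G q μ ν)
    (hGsymm : ∀ q μ ν, G q μ ν = G q ν μ)
    (hGinv : ∀ q, (Matrix.of fun μ ν => G q μ ν).det ≠ 0)
    (hVsmooth : ContDiff ℝ (⊤ : ℕ∞) V)
    (hVne : ∀ q, V q ≠ 0)
    (χ ω f : ℝ × (Fin n → ℝ) × ℝ → ℝ) (ξ : ℝ × (Fin n → ℝ) × ℝ → Fin n → ℝ)
    (hχ : ContDiffOn ℝ (⊤ : ℕ∞) χ {x : ℝ × (Fin n → ℝ) × ℝ | 0 < x.2.2})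
    (hξ : ∀ α, ContDiffOn ℝ (⊤ : ℕ∞) (fun x => ξ x α) {x : ℝ × (Fin n → ℝ) × ℝ | 0 < x.2.2})
    (hω : ContDiffOn ℝ (⊤ : ℕ∞) ω {x : ℝ × (Fin n → ℝ) × ℝ | 0 < x.2.2})
    (hf : ContDiffOn ℝ (⊤ : ℕ∞) f {x : ℝ × (Fin n → ℝ) × ℝ | 0 < x.2.2})
    -- the variational-symmetry criterion `pr¹X(L) + L·D(χ) = D(f)`, identically in
    -- `(t,q,N,v,w)` with `N > 0`; the four summands of `pr¹X(L)` are
    -- `Σ ξ^α ∂L/∂q^α`, `ω ∂L/∂N`, `Σ φ^α ∂L/∂v^α` (with `φ^α = D(ξ^α) − v^α D(χ)`),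
    -- while `χ ∂L/∂t = 0` since `L` has no explicit time dependence
    (hcrit : ∀ x : ℝ × (Fin n → ℝ) × ℝ, 0 < x.2.2 → ∀ v : Fin n → ℝ, ∀ w : ℝ,
      (∑ α : Fin n, ξ x α *
          ((1 / (2 * x.2.2)) * (∑ κ : Fin n, ∑ lam : Fin n,
              pd (fun p => G p κ lam) α x.2.1 * v κ * v lam)
            - x.2.2 * pd V α x.2.1))
      + ω x * (-(1 / (2 * x.2.2 ^ 2)) * (∑ κ : Fin n, ∑ lam : Fin n,
              G x.2.1 κ lam * v κ * v lam) - V x.2.1)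
      + (∑ α : Fin n, (Dtot (fun y => ξ y α) x v w - v α * Dtot χ x v w) *
          ((1 / (2 * x.2.2)) * ((∑ κ : Fin n, G x.2.1 κ α * v κ)
            + (∑ lam : Fin n, G x.2.1 α lam * v lam))))
      + ((1 / (2 * x.2.2)) * (∑ κ : Fin n, ∑ lam : Fin n, G x.2.1 κ lam * v κ * v lam)
          - x.2.2 * V x.2.1) * Dtot χ x v w
      = Dtot f x v w) :
    -- χ depends only on t
    (∀ t q N q' N', 0 < N → 0 < N' → χ (t, q, N) = χ (t, q', N'))
    -- each ξ^α depends only on q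
    ∧ (∀ (α : Fin n) t t' q N N', 0 < N → 0 < N' → ξ (t, q, N) α = ξ (t', q, N') α)
    -- f is constant
    ∧ (∀ x x' : ℝ × (Fin n → ℝ) × ℝ, 0 < x.2.2 → 0 < x'.2.2 → f x = f x')
    -- ω = −N (Σ ξ^α ∂V/∂q^α)/V − N dχ/dt
    ∧ (∀ t q N, 0 < N →
        ω (t, q, N) = -N * (∑ α : Fin n, ξ (t, q, N) α * pd V α q) / V q
          - N * Dt χ (t, q, N))
    -- with τ := −(Σ ξ^α ∂V/∂q^α)/V one has £_ξ G = τ G and £_ξ V = −τ V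
    ∧ (∀ t N, 0 < N →
        (∀ q μ ν, lieG (fun p α => ξ (t, p, N) α) G q μ ν
            = (-(∑ α : Fin n, ξ (t, q, N) α * pd V α q) / V q) * G q μ ν)
        ∧ (∀ q, lieV (fun p α => ξ (t, p, N) α) V q
            = -(-(∑ α : Fin n, ξ (t, q, N) α * pd V α q) / V q) * V q)) := by
  have hχd : DifferentiableOn ℝ χ {x : ℝ × (Fin n → ℝ) × ℝ | 0 < x.2.2} :=
    hχ.differentiableOn (by norm_num)
  have hfd : DifferentiableOn ℝ f {x : ℝ × (Fin n → ℝ) × ℝ | 0 < x.2.2} :=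
    hf.differentiableOn (by norm_num)
  have hξd : ∀ α, DifferentiableOn ℝ (fun x => ξ x α)
      {x : ℝ × (Fin n → ℝ) × ℝ | 0 < x.2.2} := fun α => (hξ α).differentiableOn (by norm_num)
  have hfacts := fun (x : ℝ × (Fin n → ℝ) × ℝ) (hx : 0 < x.2.2) =>
    vsc_extract hn G V χ ω f ξ x hx hGsymm (hGinv x.2.1)
      (fun v w => vsc_struct G V χ ω f ξ x v w (hcrit x hx v w))
  have hC0 : ∀ x, 0 < x.2.2 → vscC V χ ω f ξ x = 0 := fun x hx => (hfacts x hx).1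
  have hL0 : ∀ x, 0 < x.2.2 → ∀ κ, vscL G V χ f ξ x κ = 0 := fun x hx => (hfacts x hx).2.1
  have hT0 : ∀ x, 0 < x.2.2 → ∀ μ ν, vscT G χ ω ξ x μ ν + vscT G χ ω ξ x ν μ = 0 :=
    fun x hx => (hfacts x hx).2.2.1
  have hDqχ0 : ∀ x, 0 < x.2.2 → ∀ β, Dq χ β x = 0 := fun x hx => (hfacts x hx).2.2.2.1
  have hDNχ0 : ∀ x, 0 < x.2.2 → DN χ x = 0 := fun x hx => (hfacts x hx).2.2.2.2.1
  have hDNf0 : ∀ x, 0 < x.2.2 → DN f x = 0 := fun x hx => (hfacts x hx).2.2.2.2.2.1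
  have hDNξ0 : ∀ x, 0 < x.2.2 → ∀ α, DN (fun y => ξ y α) x = 0 :=
    fun x hx => (hfacts x hx).2.2.2.2.2.2
  have happ : ∀ (g : ℝ × (Fin n → ℝ) × ℝ → ℝ) (x : ℝ × (Fin n → ℝ) × ℝ)
      (a : ℝ) (b : Fin n → ℝ) (c : ℝ),
      fderiv ℝ g x (a, b, c) = a * Dt g x + (∑ β : Fin n, b β * Dq g β x) + c * DN g x :=
    fun g x a b c => vsc_clm_apply (fderiv ℝ g x) a b c
  -- χ depends only on t
  have hχc : ∀ t (q : Fin n → ℝ) N (q' : Fin n → ℝ) N', 0 < N → 0 < N' →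
      χ (t, q, N) = χ (t, q', N') := by
    intro t q N q' N' hN hN'
    set L : ((Fin n → ℝ) × ℝ) →L[ℝ] ℝ × (Fin n → ℝ) × ℝ :=
      (0 : ((Fin n → ℝ) × ℝ) →L[ℝ] ℝ).prod
        (ContinuousLinearMap.id ℝ ((Fin n → ℝ) × ℝ)) with hLdef
    have hpt : ∀ p : (Fin n → ℝ) × ℝ,
        ((t, 0, 0) : ℝ × (Fin n → ℝ) × ℝ) + L p = (t, p.1, p.2) := by
      intro p; have h1 : L p = (0, p.1, p.2) := rfl; rw [h1]; simp [Prod.ext_iff]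
    have hconv : Convex ℝ {p : (Fin n → ℝ) × ℝ | 0 < p.2} :=
      convex_halfSpace_gt ⟨fun _ _ => rfl, fun _ _ => rfl⟩ 0
    have h := vsc_slice_const χ vsc_isOpen hχd ((t, 0, 0)) L hconv
      (fun p hp => by rw [hpt]; exact hp)
      (fun p hp y => by
        rw [hpt]
        have hy : L y = (0, y.1, y.2) := rfl
        rw [hy, happ]
        have h1 : ∀ β, Dq χ β ((t, p.1, p.2) : ℝ × (Fin n → ℝ) × ℝ) = 0 :=
          fun β => hDqχ0 (t, p.1, p.2) hp β
        have h2 : DN χ ((t, p.1, p.2) : ℝ × (Fin n → ℝ) × ℝ) = 0 := hDNχ0 (t, p.1, p.2) hp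
        simp [h1, h2])
      (p := (q, N)) (p' := (q', N')) hN hN'
    rw [hpt, hpt] at h
    exact h
  -- ξ independent of N (first step)
  have hξN : ∀ (α : Fin n) t q N N', 0 < N → 0 < N' → ξ (t, q, N) α = ξ (t, q, N') α := by
    intro α t q N N' hN hN'
    set L : ℝ →L[ℝ] ℝ × (Fin n → ℝ) × ℝ :=
      (0 : ℝ →L[ℝ] ℝ).prod ((0 : ℝ →L[ℝ] (Fin n → ℝ)).prod (ContinuousLinearMap.id ℝ ℝ))
      with hLdef
    have hpt : ∀ c : ℝ, ((t, q, 0) : ℝ × (Fin n → ℝ) × ℝ) + L c = (t, q, c) := by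
      intro c; have h1 : L c = (0, 0, c) := rfl; rw [h1]; simp [Prod.ext_iff]
    have h := vsc_slice_const (fun y => ξ y α) vsc_isOpen (hξd α) ((t, q, 0)) L
      (convex_Ioi (0:ℝ))
      (fun c hc => by rw [hpt]; exact hc)
      (fun c hc y => by
        rw [hpt]
        have hy : L y = (0, 0, y) := rfl
        rw [hy, happ]
        have h2 : DN (fun y => ξ y α) ((t, q, c) : ℝ × (Fin n → ℝ) × ℝ) = 0 := hDNξ0 (t, q, c) hc α
        simp [h2])
      (p := N) (p' := N') hN hN'
    rw [hpt, hpt] at h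
    exact h
  -- f independent of N
  have hfN : ∀ t q N N', 0 < N → 0 < N' → f (t, q, N) = f (t, q, N') := by
    intro t q N N' hN hN'
    set L : ℝ →L[ℝ] ℝ × (Fin n → ℝ) × ℝ :=
      (0 : ℝ →L[ℝ] ℝ).prod ((0 : ℝ →L[ℝ] (Fin n → ℝ)).prod (ContinuousLinearMap.id ℝ ℝ))
      with hLdef
    have hpt : ∀ c : ℝ, ((t, q, 0) : ℝ × (Fin n → ℝ) × ℝ) + L c = (t, q, c) := by
      intro c; have h1 : L c = (0, 0, c) := rfl; rw [h1]; simp [Prod.ext_iff]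
    have h := vsc_slice_const f vsc_isOpen hfd ((t, q, 0)) L (convex_Ioi (0:ℝ))
      (fun c hc => by rw [hpt]; exact hc)
      (fun c hc y => by
        rw [hpt]
        have hy : L y = (0, 0, y) := rfl
        rw [hy, happ]
        have h2 : DN f ((t, q, c) : ℝ × (Fin n → ℝ) × ℝ) = 0 := hDNf0 (t, q, c) hc
        simp [h2])
      (p := N) (p' := N') hN hN'
    rw [hpt, hpt] at h
    exact h
  -- transfer: Dt of ξ is independent of N
  have hDtξN : ∀ (α : Fin n) t q N N', 0 < N → 0 < N' →
      Dt (fun y => ξ y α) (t, q, N) = Dt (fun y => ξ y α) (t, q, N') := by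
    intro α t q N N' hN hN'
    rw [vsc_Dt_eq (fun y => ξ y α) (hξd α) t q N hN,
      vsc_Dt_eq (fun y => ξ y α) (hξd α) t q N' hN']
    have hfuneq : (fun s => ξ (s, q, N) α) = (fun s => ξ (s, q, N') α) :=
      funext fun s => hξN α s q N N' hN hN'
    rw [hfuneq]
  -- transfer: Dq of f is independent of N
  have hDqfN : ∀ (κ : Fin n) t q N N', 0 < N → 0 < N' →
      Dq f κ (t, q, N) = Dq f κ (t, q, N') := by
    intro κ t q N N' hN hN'
    rw [vsc_Dq_eq f hfd t q N hN κ, vsc_Dq_eq f hfd t q N' hN' κ]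
    have hfuneq : (fun p => f (t, p, N)) = (fun p => f (t, p, N')) :=
      funext fun p => hfN t p N N' hN hN'
    rw [hfuneq]
  -- from the linear coefficient: ∑ Dtξ G = N Dq f
  have hLL : ∀ t q N, 0 < N → ∀ κ,
      (∑ α : Fin n, Dt (fun y => ξ y α) (t, q, N) * G q α κ)
        = N * Dq f κ (t, q, N) := by
    intro t q N hN κ
    have h := hL0 (t, q, N) hN κ
    simp only [vscL] at h
    have hdq : Dq χ κ ((t, q, N) : ℝ × (Fin n → ℝ) × ℝ) = 0 := hDqχ0 (t, q, N) hN κ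
    rw [hdq] at h
    have h1 : (∑ α : Fin n, Dt (fun y => ξ y α) ((t, q, N) : ℝ × (Fin n → ℝ) × ℝ) *
        (1 / (2 * ((t, q, N) : ℝ × (Fin n → ℝ) × ℝ).2.2) *
          (G ((t, q, N) : ℝ × (Fin n → ℝ) × ℝ).2.1 κ α
            + G ((t, q, N) : ℝ × (Fin n → ℝ) × ℝ).2.1 α κ)))
        = (∑ α : Fin n, Dt (fun y => ξ y α) (t, q, N) * G q α κ) * (2 * (1 / (2 * N))) := by
      rw [Finset.sum_mul]
      refine Finset.sum_congr rfl fun α _ => ?_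
      show Dt (fun y => ξ y α) (t, q, N) * (1 / (2 * N) * (G q κ α + G q α κ)) = _
      rw [hGsymm q κ α]
      ring
    rw [h1] at h
    have hN0 : N ≠ 0 := ne_of_gt hN
    have h2 : (∑ α : Fin n, Dt (fun y => ξ y α) (t, q, N) * G q α κ) * (2 * (1 / (2 * N)))
        = (∑ α : Fin n, Dt (fun y => ξ y α) (t, q, N) * G q α κ) / N := by
      field_simp
    rw [h2] at h
    have h3 : (∑ α : Fin n, Dt (fun y => ξ y α) (t, q, N) * G q α κ) / N
        = Dq f κ ((t, q, N) : ℝ × (Fin n → ℝ) × ℝ) := by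
      show _ = Dq f κ (t, q, N)
      linarith [h]
    rw [div_eq_iff hN0] at h3
    linarith [h3]
  -- Dq f vanishes
  have hDqf : ∀ t q N, 0 < N → ∀ κ, Dq f κ (t, q, N) = 0 := by
    intro t q N hN κ
    have hN2 : (0:ℝ) < 2 * N := by linarith
    have e1 := hLL t q N hN κ
    have e2 := hLL t q (2 * N) hN2 κ
    have heqsum : (∑ α : Fin n, Dt (fun y => ξ y α) (t, q, 2 * N) * G q α κ)
        = (∑ α : Fin n, Dt (fun y => ξ y α) (t, q, N) * G q α κ) :=
      Finset.sum_congr rfl fun α _ => by rw [hDtξN α t q (2*N) N hN2 hN]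
    rw [heqsum] at e2
    rw [hDqfN κ t q (2*N) N hN2 hN] at e2
    have : N * Dq f κ (t, q, N) = 0 := by linarith
    rcases mul_eq_zero.mp this with h' | h'
    · exact absurd h' (ne_of_gt hN)
    · exact h'
  -- Dt ξ vanishes
  have hDtξ : ∀ (α : Fin n) t q N, 0 < N → Dt (fun y => ξ y α) (t, q, N) = 0 := by
    intro α t q N hN
    have hsum : ∀ κ, (∑ α : Fin n, Dt (fun y => ξ y α) (t, q, N) * G q α κ) = 0 := by
      intro κ
      rw [hLL t q N hN κ, hDqf t q N hN κ]
      ring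
    exact vsc_vec_zero (fun α κ => G q α κ) (hGinv q)
      (fun α => Dt (fun y => ξ y α) (t, q, N)) hsum α
  -- ξ depends only on q
  have hξc : ∀ (α : Fin n) t t' q N N', 0 < N → 0 < N' → ξ (t, q, N) α = ξ (t', q, N') α := by
    intro α t t' q N N' hN hN'
    set L : (ℝ × ℝ) →L[ℝ] ℝ × (Fin n → ℝ) × ℝ :=
      (ContinuousLinearMap.fst ℝ ℝ ℝ).prod
        ((0 : (ℝ × ℝ) →L[ℝ] (Fin n → ℝ)).prod (ContinuousLinearMap.snd ℝ ℝ ℝ)) with hLdef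
    have hpt : ∀ p : ℝ × ℝ,
        ((0, q, 0) : ℝ × (Fin n → ℝ) × ℝ) + L p = (p.1, q, p.2) := by
      intro p; have h1 : L p = (p.1, 0, p.2) := rfl; rw [h1]; simp [Prod.ext_iff]
    have hconv : Convex ℝ {p : ℝ × ℝ | 0 < p.2} :=
      convex_halfSpace_gt ⟨fun _ _ => rfl, fun _ _ => rfl⟩ 0
    have h := vsc_slice_const (fun y => ξ y α) vsc_isOpen (hξd α) ((0, q, 0)) L hconv
      (fun p hp => by rw [hpt]; exact hp)
      (fun p hp y => by
        rw [hpt]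
        have hy : L y = (y.1, 0, y.2) := rfl
        rw [hy, happ]
        have h1 : Dt (fun y => ξ y α) ((p.1, q, p.2) : ℝ × (Fin n → ℝ) × ℝ) = 0 :=
          hDtξ α p.1 q p.2 hp
        have h2 : DN (fun y => ξ y α) ((p.1, q, p.2) : ℝ × (Fin n → ℝ) × ℝ) = 0 :=
          hDNξ0 (p.1, q, p.2) hp α
        simp [h1, h2])
      (p := (t, N)) (p' := (t', N')) hN hN'
    rw [hpt, hpt] at h
    exact h
  -- Lie-type identity from the quadratic coefficient
  have hLie : ∀ t q N, 0 < N → ∀ μ ν,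
      (∑ α : Fin n, ξ (t, q, N) α * pd (fun p => G p μ ν) α q)
        + (∑ α : Fin n, Dq (fun y => ξ y α) μ (t, q, N) * G q α ν)
        + (∑ α : Fin n, Dq (fun y => ξ y α) ν (t, q, N) * G q μ α)
      = (ω (t, q, N) / N + Dt χ (t, q, N)) * G q μ ν := by
    intro t q N hN μ ν
    have hN0 : N ≠ 0 := ne_of_gt hN
    have h := hT0 (t, q, N) hN μ ν
    simp only [vscT] at h
    have hfun : (fun p => G p ν μ) = (fun p => G p μ ν) := funext fun p => hGsymm p ν μ
    rw [hfun] at h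
    have eB : (∑ α : Fin n, Dq (fun y => ξ y α) μ ((t, q, N) : ℝ × (Fin n → ℝ) × ℝ) *
        (1 / (2 * N) * (G q ν α + G q α ν)))
        = (∑ α : Fin n, Dq (fun y => ξ y α) μ (t, q, N) * G q α ν) * (2 * (1 / (2 * N))) := by
      rw [Finset.sum_mul]
      refine Finset.sum_congr rfl fun α _ => ?_
      rw [hGsymm q ν α]
      ring
    have eC : (∑ α : Fin n, Dq (fun y => ξ y α) ν ((t, q, N) : ℝ × (Fin n → ℝ) × ℝ) *
        (1 / (2 * N) * (G q μ α + G q α μ)))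
        = (∑ α : Fin n, Dq (fun y => ξ y α) ν (t, q, N) * G q μ α) * (2 * (1 / (2 * N))) := by
      rw [Finset.sum_mul]
      refine Finset.sum_congr rfl fun α _ => ?_
      rw [hGsymm q α μ]
      ring
    rw [eB, eC] at h
    rw [hGsymm q ν μ] at h
    field_simp at h
    have h32 : 32 * N ^ 4 * (((∑ α : Fin n, ξ (t, q, N) α * pd (fun p => G p μ ν) α q) + (∑ α : Fin n, Dq (fun y => ξ y α) μ (t, q, N) * G q α ν) + (∑ α : Fin n, Dq (fun y => ξ y α) ν (t, q, N) * G q μ α)) * N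
        - (ω (t, q, N) + Dt χ (t, q, N) * N) * G q μ ν) = 0 := by
      linear_combination 16 * N ^ 4 * h
    have hX : ((∑ α : Fin n, ξ (t, q, N) α * pd (fun p => G p μ ν) α q) + (∑ α : Fin n, Dq (fun y => ξ y α) μ (t, q, N) * G q α ν) + (∑ α : Fin n, Dq (fun y => ξ y α) ν (t, q, N) * G q μ α)) * N
        - (ω (t, q, N) + Dt χ (t, q, N) * N) * G q μ ν = 0 := by
      rcases mul_eq_zero.mp h32 with h' | h'
      · exfalso
        have : (32 : ℝ) * N ^ 4 ≠ 0 := by positivity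
        exact this h'
      · exact h'
    field_simp
    linarith [hX]
  -- independence transfers
  have hAeq : ∀ t q N N', 0 < N → 0 < N' →
      (∑ α : Fin n, ξ (t, q, N) α * pd V α q) = (∑ α : Fin n, ξ (t, q, N') α * pd V α q) :=
    fun t q N N' hN hN' => Finset.sum_congr rfl fun α _ => by rw [hξN α t q N N' hN hN']
  have hDqξeq : ∀ (α μ : Fin n) t q N N', 0 < N → 0 < N' →
      Dq (fun y => ξ y α) μ (t, q, N) = Dq (fun y => ξ y α) μ (t, q, N') := by
    intro α μ t q N N' hN hN'
    rw [vsc_Dq_eq (fun y => ξ y α) (hξd α) t q N hN μ,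
      vsc_Dq_eq (fun y => ξ y α) (hξd α) t q N' hN' μ]
    have hfuneq : (fun p => ξ (t, p, N) α) = (fun p => ξ (t, p, N') α) :=
      funext fun p => hξN α t p N N' hN hN'
    rw [hfuneq]
  have hDtχeq : ∀ t q N N', 0 < N → 0 < N' → Dt χ (t, q, N) = Dt χ (t, q, N') := by
    intro t q N N' hN hN'
    rw [vsc_Dt_eq χ hχd t q N hN, vsc_Dt_eq χ hχd t q N' hN']
    have hfuneq : (fun s => χ (s, q, N)) = (fun s => χ (s, q, N')) :=
      funext fun s => hχc s q N q N' hN hN'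
    rw [hfuneq]
  have hDtfeq : ∀ t q N N', 0 < N → 0 < N' → Dt f (t, q, N) = Dt f (t, q, N') := by
    intro t q N N' hN hN'
    rw [vsc_Dt_eq f hfd t q N hN, vsc_Dt_eq f hfd t q N' hN']
    have hfuneq : (fun s => f (s, q, N)) = (fun s => f (s, q, N')) :=
      funext fun s => hfN s q N N' hN hN'
    rw [hfuneq]
  -- ω scales linearly in N
  have hωrel : ∀ t q N, 0 < N → ω (t, q, 2 * N) = 2 * ω (t, q, N) := by
    intro t q N hN
    have hN2 : (0:ℝ) < 2 * N := by linarith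
    obtain ⟨μ0, ν0, hG0⟩ := vsc_exists_entry hn (G q) (hGinv q)
    have e1 := hLie t q N hN μ0 ν0
    have e2 := hLie t q (2 * N) hN2 μ0 ν0
    have eS1 : (∑ α : Fin n, ξ (t, q, 2 * N) α * pd (fun p => G p μ0 ν0) α q)
        = (∑ α : Fin n, ξ (t, q, N) α * pd (fun p => G p μ0 ν0) α q) :=
      Finset.sum_congr rfl fun α _ => by rw [hξN α t q (2 * N) N hN2 hN]
    have eS2 : (∑ α : Fin n, Dq (fun y => ξ y α) μ0 (t, q, 2 * N) * G q α ν0)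
        = (∑ α : Fin n, Dq (fun y => ξ y α) μ0 (t, q, N) * G q α ν0) :=
      Finset.sum_congr rfl fun α _ => by rw [hDqξeq α μ0 t q (2 * N) N hN2 hN]
    have eS3 : (∑ α : Fin n, Dq (fun y => ξ y α) ν0 (t, q, 2 * N) * G q μ0 α)
        = (∑ α : Fin n, Dq (fun y => ξ y α) ν0 (t, q, N) * G q μ0 α) :=
      Finset.sum_congr rfl fun α _ => by rw [hDqξeq α ν0 t q (2 * N) N hN2 hN]
    rw [eS1, eS2, eS3, hDtχeq t q (2 * N) N hN2 hN] at e2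
    have hfac : (ω (t, q, N) / N + Dt χ (t, q, N))
        = (ω (t, q, 2 * N) / (2 * N) + Dt χ (t, q, N)) := by
      have := e1.symm.trans e2
      exact mul_right_cancel₀ hG0 this
    have hN0 : N ≠ 0 := ne_of_gt hN
    field_simp at hfac
    have h3 : N * ω (t, q, 2 * N) = N * (2 * ω (t, q, N)) := by rw [mul_comm N 2] at hfac; linear_combination -N * hfac
    exact mul_left_cancel₀ hN0 h3
  -- constant coefficient processed
  have hCC : ∀ t q N, 0 < N →
      -(N) * (∑ α : Fin n, ξ (t, q, N) α * pd V α q) - ω (t, q, N) * V q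
        - N * V q * Dt χ (t, q, N) - Dt f (t, q, N) = 0 := by
    intro t q N hN
    have h := hC0 (t, q, N) hN
    simp only [vscC] at h
    have hsum : (∑ α : Fin n, ξ ((t, q, N) : ℝ × (Fin n → ℝ) × ℝ) α * (-N * pd V α q))
        = -(N) * (∑ α : Fin n, ξ (t, q, N) α * pd V α q) := by
      rw [Finset.mul_sum]
      exact Finset.sum_congr rfl fun α _ => by ring
    rw [hsum] at h
    linarith [h]
  -- Dt f = 0 and the ω formula
  have hDtf0 : ∀ t q N, 0 < N → Dt f (t, q, N) = 0 := by
    intro t q N hN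
    have hN2 : (0:ℝ) < 2 * N := by linarith
    have c1 := hCC t q N hN
    have c2 := hCC t q (2 * N) hN2
    rw [hAeq t q (2 * N) N hN2 hN, hDtχeq t q (2 * N) N hN2 hN,
      hDtfeq t q (2 * N) N hN2 hN, hωrel t q N hN] at c2
    linarith [c1, c2]
  have hωf : ∀ t q N, 0 < N →
      ω (t, q, N) = -N * (∑ α : Fin n, ξ (t, q, N) α * pd V α q) / V q
        - N * Dt χ (t, q, N) := by
    intro t q N hN
    have c1 := hCC t q N hN
    rw [hDtf0 t q N hN] at c1
    have hV := hVne q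
    field_simp
    linarith [c1]
  -- f is constant
  have hfc : ∀ x x' : ℝ × (Fin n → ℝ) × ℝ, 0 < x.2.2 → 0 < x'.2.2 → f x = f x' := by
    intro x x' hx hx'
    set L : (ℝ × (Fin n → ℝ) × ℝ) →L[ℝ] ℝ × (Fin n → ℝ) × ℝ :=
      ContinuousLinearMap.id ℝ (ℝ × (Fin n → ℝ) × ℝ) with hLdef
    have hpt : ∀ p : ℝ × (Fin n → ℝ) × ℝ, (0 : ℝ × (Fin n → ℝ) × ℝ) + L p = p := by
      intro p; simp [hLdef]
    have hconv : Convex ℝ {x : ℝ × (Fin n → ℝ) × ℝ | 0 < x.2.2} :=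
      convex_halfSpace_gt ⟨fun _ _ => rfl, fun _ _ => rfl⟩ 0
    have h := vsc_slice_const f vsc_isOpen hfd 0 L hconv
      (fun p hp => by rw [hpt]; exact hp)
      (fun p hp y => by
        rw [hpt]
        have h1 : Dt f p = 0 := hDtf0 p.1 p.2.1 p.2.2 hp
        have h2 : ∀ β, Dq f β p = 0 := fun β => hDqf p.1 p.2.1 p.2.2 hp β
        have h3 : DN f p = 0 := hDNf0 p hp
        have h4 : fderiv ℝ f p (y.1, y.2.1, y.2.2) = 0 := by
          rw [happ, h1, h3]
          simp [h2]
        exact h4)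
      (p := x) (p' := x') hx hx'
    rw [hpt, hpt] at h
    exact h
  refine ⟨hχc, hξc, hfc, hωf, ?_⟩
  -- Lie derivative conclusions
  intro t N hN
  constructor
  · intro q μ ν
    have h := hLie t q N hN μ ν
    have hpd : ∀ (α μ' : Fin n), Dq (fun y => ξ y α) μ' (t, q, N)
        = pd (fun p => ξ (t, p, N) α) μ' q := fun α μ' =>
      vsc_Dq_eq (fun y => ξ y α) (hξd α) t q N hN μ'
    have hlie : lieG (fun p α => ξ (t, p, N) α) G q μ ν
        = (∑ α : Fin n, ξ (t, q, N) α * pd (fun p => G p μ ν) α q)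
          + (∑ α : Fin n, Dq (fun y => ξ y α) μ (t, q, N) * G q α ν)
          + (∑ α : Fin n, Dq (fun y => ξ y α) ν (t, q, N) * G q μ α) := by
      simp only [lieG]
      rw [Finset.sum_add_distrib, Finset.sum_add_distrib]
      have hB : (∑ α : Fin n, pd (fun p => ξ (t, p, N) α) μ q * G q α ν)
          = ∑ α : Fin n, Dq (fun y => ξ y α) μ (t, q, N) * G q α ν :=
        Finset.sum_congr rfl fun α _ => by rw [hpd α μ]
      have hC2 : (∑ α : Fin n, pd (fun p => ξ (t, p, N) α) ν q * G q μ α)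
          = ∑ α : Fin n, Dq (fun y => ξ y α) ν (t, q, N) * G q μ α :=
        Finset.sum_congr rfl fun α _ => by rw [hpd α ν]
      rw [hB, hC2]
    rw [hlie, h]
    have hτ : ω (t, q, N) / N + Dt χ (t, q, N)
        = -(∑ α : Fin n, ξ (t, q, N) α * pd V α q) / V q := by
      rw [hωf t q N hN]
      have hV := hVne q
      have hN0 : N ≠ 0 := ne_of_gt hN
      field_simp
      ring
    rw [hτ]
  · intro q
    simp only [lieV]
    have hV := hVne q
    field_simp
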